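/- Let p ≥ 2, r ≥ 2, and let w be any positive braid word on p strands of the form w = α · ((σ_1⋯σ_{p-1})^p)^r, where α is an arbitrary positive braid word. Then any two distinct strands of w cross at least 2r ≥ 4 times. Consequently, any two distinct components of the closure of w have linking number at least r ≥ 2 (linking number being half the crossing count between the components, all crossings being positive). -/

import Mathlib

open scoped Classical

/-- The orbit of `x` under a permutation `π`: `{π^n x : n ∈ ℤ}`. -/
def permOrbit {α : Type*} (π : Equiv.Perm α) (x : α) : Set α := {y | π.SameCycle x y}

/-- The number of orbits of a permutation. -/
noncomputable def orbitCount {α : Type*} (π : Equiv.Perm α) : ℕ :=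
  (Set.range (permOrbit π)).ncard

/-- The transposition of adjacent positions `i`, `i+1` (0-indexed) on `Fin p`,
corresponding to the braid letter `σ_{i+1}`; identity if out of range. -/
def stepPerm (p i : ℕ) : Equiv.Perm (Fin p) :=
  if h : i + 1 < p then Equiv.swap ⟨i, Nat.lt_of_succ_lt h⟩ ⟨i + 1, h⟩ else 1

/-- Position-tracking: `posAfter p w t` is the position function after the first
`t` letters of the positive braid word `w` (letter `i` denotes `σ_{i+1}`). -/
def posAfter (p : ℕ) (w : List ℕ) (t : ℕ) : Equiv.Perm (Fin p) :=
  ((w.take t).map (stepPerm p)).foldl (fun a g => g * a) 1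

/-- The underlying permutation of a positive braid word. -/
def permOf (p : ℕ) (w : List ℕ) : Equiv.Perm (Fin p) := posAfter p w w.length

/-- The number of letters of `w` at which strands `s` and `s'` cross. -/
def crossCount (p : ℕ) (w : List ℕ) (s s' : Fin p) : ℕ :=
  ((Finset.range w.length).filter fun t =>
    ({(posAfter p w t s).val, (posAfter p w t s').val} : Finset ℕ)
      = {w.getD t 0, w.getD t 0 + 1}).card

/-- Concatenation of `q` copies of the word `u`. -/
def wordPow (u : List ℕ) (q : ℕ) : List ℕ := (List.replicate q u).flatten

/-- The word `σ_1 σ_2 ⋯ σ_{m-1}` (0-indexed letters `0,…,m-2`). -/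
def ascBlock (m : ℕ) : List ℕ := List.range (m - 1)

/-- The full twist word `(σ_1 ⋯ σ_{p-1})^p` on `p` strands. -/
def fullTwistWord (p : ℕ) : List ℕ := wordPow (ascBlock p) p

/-- The orbit of `x` under `π`, as a finset. -/
noncomputable def orbitFinset (p : ℕ) (π : Equiv.Perm (Fin p)) (x : Fin p) : Finset (Fin p) :=
  Finset.univ.filter fun y => π.SameCycle x y

/-- Total number of crossings in `w` between the strands of the component of `s`
and the strands of the component of `s'` (components w.r.t. `π`). -/
noncomputable def crossBetween (p : ℕ) (w : List ℕ) (π : Equiv.Perm (Fin p))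
    (s s' : Fin p) : ℕ :=
  ∑ x ∈ orbitFinset p π s, ∑ y ∈ orbitFinset p π s', crossCount p w x y

/-- Linking number of the components of `s` and `s'` in the closure of the positive
braid word `w`: half the number of crossings between them. -/
noncomputable def linking (p : ℕ) (w : List ℕ) (π : Equiv.Perm (Fin p))
    (s s' : Fin p) : ℕ :=
  crossBetween p w π s s' / 2

/-- The 3-cycle `(0 1 2)` on `Fin N`, fixing all other points. -/
def tau3 (N : ℕ) (h : 3 ≤ N) : Equiv.Perm (Fin N) :=
  Equiv.swap ⟨0, by omega⟩ ⟨2, by omega⟩ * Equiv.swap ⟨0, by omega⟩ ⟨1, by omega⟩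

/-- `Fin s` is equivalent to the points of `Fin N` with value `< s`. -/
def subEquiv (s N : ℕ) (h : s ≤ N) : Fin s ≃ {x : Fin N // (x : ℕ) < s} where
  toFun x := ⟨⟨x, lt_of_lt_of_le x.2 h⟩, x.2⟩
  invFun y := ⟨(y.1 : ℕ), y.2⟩
  left_inv x := rfl
  right_inv y := rfl

/-- The permutation of `Fin N` acting as `x ↦ x + c (mod s)` on `{0,…,s-1}` and
fixing all points `≥ s`. -/
def tauShift (s c N : ℕ) (h : s ≤ N) : Equiv.Perm (Fin N) :=
  (finRotate s ^ c).extendDomain (subEquiv s N h)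

lemma foldl_mul_eq {G : Type*} [Monoid G] (l : List G) (x : G) :
    l.foldl (fun a g => g * a) x = l.foldl (fun a g => g * a) 1 * x := by
  induction l generalizing x with
  | nil => simp
  | cons h t ih =>
    simp only [List.foldl_cons]
    rw [ih (h * x), ih (h * 1), mul_one, mul_assoc]

lemma posAfter_succ (p : ℕ) (w : List ℕ) (t : ℕ) (ht : t < w.length) :
    posAfter p w (t + 1) = stepPerm p (w.getD t 0) * posAfter p w t := by
  unfold posAfter
  rw [List.take_succ, List.getElem?_eq_getElem ht]
  simp only [Option.toList_some, List.map_append, List.foldl_append, List.map_cons,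
    List.map_nil, List.foldl_cons, List.foldl_nil]
  rw [foldl_mul_eq, List.getD_eq_getElem _ _ ht]

lemma ascBlock_length (p : ℕ) : (ascBlock p).length = p - 1 := by
  simp [ascBlock]

lemma posAfter_ascBlock (p : ℕ) (t : ℕ) (ht : t ≤ p - 1) (z : Fin p) :
    (posAfter p (ascBlock p) t z : ℕ) =
      if (z : ℕ) = 0 then t else if (z : ℕ) ≤ t then (z : ℕ) - 1 else (z : ℕ) := by
  have hp : 0 < p := z.pos
  induction t with
  | zero =>
    have h1 : posAfter p (ascBlock p) 0 = 1 := by simp [posAfter]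
    rw [h1]
    simp only [Equiv.Perm.one_def, Equiv.refl_apply]
    split_ifs <;> omega
  | succ t iht =>
    have ht' : t ≤ p - 1 := by omega
    have htl : t < (ascBlock p).length := by rw [ascBlock_length]; omega
    have hgd : (ascBlock p).getD t 0 = t := by
      rw [List.getD_eq_getElem _ _ htl]; simp [ascBlock]
    have ht1 : t + 1 < p := by omega
    rw [posAfter_succ p _ t htl, hgd, Equiv.Perm.mul_apply]
    have hv := iht ht'
    rw [stepPerm, dif_pos ht1]
    set v := posAfter p (ascBlock p) t z with hvdef
    by_cases hA : v = (⟨t, by omega⟩ : Fin p)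
    · rw [hA, Equiv.swap_apply_left]
      have hAv : (v : ℕ) = t := by rw [hA]
      rw [hAv] at hv
      show t + 1 = _
      split_ifs at hv ⊢ <;> omega
    · by_cases hB : v = (⟨t + 1, ht1⟩ : Fin p)
      · rw [hB, Equiv.swap_apply_right]
        have hBv : (v : ℕ) = t + 1 := by rw [hB]
        rw [hBv] at hv
        show t = _
        split_ifs at hv ⊢ <;> omega
      · rw [Equiv.swap_apply_of_ne_of_ne hA hB]
        have hAv : (v : ℕ) ≠ t := fun hc => hA (Fin.ext hc)
        have hBv : (v : ℕ) ≠ t + 1 := fun hc => hB (Fin.ext hc)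
        rw [hv] at hAv hBv ⊢
        split_ifs at hAv hBv ⊢ <;> omega
lemma posAfter_append_le (p : ℕ) (u v : List ℕ) (t : ℕ) (ht : t ≤ u.length) :
    posAfter p (u ++ v) t = posAfter p u t := by
  unfold posAfter
  rw [List.take_append_of_le_length ht]

lemma posAfter_append_add (p : ℕ) (u v : List ℕ) (k : ℕ) :
    posAfter p (u ++ v) (u.length + k) = posAfter p v k * permOf p u := by
  unfold posAfter permOf posAfter
  rw [List.take_append, List.map_append, List.foldl_append, foldl_mul_eq, List.take_length]
  rw [Nat.add_sub_cancel_left, List.take_of_length_le (l := u) (by omega)]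

lemma crossCount_append (p : ℕ) (u v : List ℕ) (s s' : Fin p) :
    crossCount p (u ++ v) s s' =
      crossCount p u s s' + crossCount p v (permOf p u s) (permOf p u s') := by
  classical
  unfold crossCount
  rw [List.length_append, Finset.range_add, Finset.filter_union,
    Finset.card_union_of_disjoint, Finset.filter_map, Finset.card_map]
  · congr 1
    · congr 1
      apply Finset.filter_congr
      intro t htt
      rw [Finset.mem_range] at htt
      rw [posAfter_append_le p u v t (le_of_lt htt)]
      rw [List.getD_eq_getElem (u ++ v) _ (by simp; omega), List.getD_eq_getElem _ _ htt,
        List.getElem_append_left]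
    · congr 1
      apply Finset.filter_congr
      intro k hk
      rw [Finset.mem_range] at hk
      simp only [Function.comp, addLeftEmbedding_apply]
      rw [posAfter_append_add p u v k,
        List.getD_eq_getElem (u ++ v) _ (by simp; omega), List.getD_eq_getElem _ _ hk]
      simp [List.getElem_append_right, Equiv.Perm.mul_apply]
  · rw [Finset.disjoint_left]
    intro a ha hb
    rw [Finset.mem_filter, Finset.mem_range] at ha
    rw [Finset.mem_filter, Finset.mem_map] at hb
    obtain ⟨⟨k, hk, hak⟩, -⟩ := hb
    rw [addLeftEmbedding_apply] at hak
    omega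

lemma crossCount_comm (p : ℕ) (w : List ℕ) (s s' : Fin p) :
    crossCount p w s s' = crossCount p w s' s := by
  unfold crossCount
  congr 1
  apply Finset.filter_congr
  intro t _
  rw [Finset.pair_comm ((posAfter p w t s).val)]

lemma wordPow_succ (u : List ℕ) (q : ℕ) : wordPow u (q + 1) = u ++ wordPow u q := by
  simp [wordPow, List.replicate_succ]

lemma crossCount_wordPow (p : ℕ) (u : List ℕ) (q : ℕ) (s s' : Fin p) :
    crossCount p (wordPow u q) s s' =
      ∑ k ∈ Finset.range q,
        crossCount p u ((permOf p u ^ k) s) ((permOf p u ^ k) s') := by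
  induction q generalizing s s' with
  | zero => simp [wordPow, crossCount]
  | succ q ih =>
    rw [wordPow_succ, crossCount_append, ih, Finset.sum_range_succ']
    simp only [pow_succ, Equiv.Perm.mul_apply, pow_zero, Equiv.Perm.one_def, Equiv.refl_apply]
    omega

lemma permOf_ascBlock (p : ℕ) (z : Fin p) :
    (permOf p (ascBlock p) z : ℕ) = ((z : ℕ) + (p - 1)) % p := by
  have hp : 0 < p := z.pos
  have h := posAfter_ascBlock p (p - 1) le_rfl z
  rw [permOf, ascBlock_length]
  rw [h]
  have hz := z.isLt
  split_ifs with h1 h2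
  · rw [h1, Nat.zero_add, Nat.mod_eq_of_lt (by omega)]
  · have he : (z : ℕ) + (p - 1) = ((z : ℕ) - 1) + p := by omega
    rw [he, Nat.add_mod_right, Nat.mod_eq_of_lt (by omega)]
  · omega

lemma permOf_ascBlock_pow (p : ℕ) (k : ℕ) (z : Fin p) :
    ((permOf p (ascBlock p) ^ k) z : ℕ) = ((z : ℕ) + k * (p - 1)) % p := by
  have hp : 0 < p := z.pos
  induction k with
  | zero => simp [Nat.mod_eq_of_lt z.isLt]
  | succ k ih =>
    rw [pow_succ', Equiv.Perm.mul_apply, permOf_ascBlock, ih, Nat.mod_add_mod]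
    congr 1
    ring

lemma pow_val_eq_zero (p : ℕ) (s : Fin p) :
    ((permOf p (ascBlock p) ^ (s : ℕ)) s : ℕ) = 0 := by
  have hp : 0 < p := s.pos
  obtain ⟨n, rfl⟩ : ∃ n, p = n + 1 := ⟨p - 1, by omega⟩
  rw [permOf_ascBlock_pow]
  have h1 : (s : ℕ) + (s : ℕ) * (n + 1 - 1) = (s : ℕ) * (n + 1) := by
    simp; ring
  rw [h1, Nat.mul_mod_left]

lemma one_le_crossCount_ascBlock (p : ℕ) (x y : Fin p) (hx : (x : ℕ) = 0) (hxy : x ≠ y) :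
    1 ≤ crossCount p (ascBlock p) x y := by
  classical
  have hy : 1 ≤ (y : ℕ) := by
    rcases Nat.eq_zero_or_pos (y : ℕ) with h | h
    · exact absurd (Fin.ext (hx.trans h.symm) : x = y) hxy
    · exact h
  have hyp := y.isLt
  rw [crossCount, Finset.one_le_card]
  refine ⟨(y : ℕ) - 1, ?_⟩
  rw [Finset.mem_filter, Finset.mem_range, ascBlock_length]
  have htle : (y : ℕ) - 1 ≤ p - 1 := by omega
  refine ⟨by omega, ?_⟩
  have h0 := posAfter_ascBlock p ((y : ℕ) - 1) htle x
  have h1 := posAfter_ascBlock p ((y : ℕ) - 1) htle y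
  rw [hx, if_pos rfl] at h0
  rw [if_neg (by omega), if_neg (by omega)] at h1
  have hgd : (ascBlock p).getD ((y : ℕ) - 1) 0 = (y : ℕ) - 1 := by
    rw [List.getD_eq_getElem _ _ (by rw [ascBlock_length]; omega)]; simp [ascBlock]
  rw [h0, h1, hgd]
  congr 2
  omega
lemma two_le_crossCount_fullTwist (p : ℕ) (hp : 2 ≤ p) (s s' : Fin p) (h : s ≠ s') :
    2 ≤ crossCount p (fullTwistWord p) s s' := by
  classical
  rw [fullTwistWord, crossCount_wordPow]
  set c := permOf p (ascBlock p) with hc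
  set f : ℕ → ℕ := fun k =>
    crossCount p (ascBlock p) ((c ^ k) s) ((c ^ k) s') with hf
  have hvne : (s : ℕ) ≠ (s' : ℕ) := fun hh => h (Fin.ext hh)
  have hsub : ({(s : ℕ), (s' : ℕ)} : Finset ℕ) ⊆ Finset.range p := by
    intro a ha
    rw [Finset.mem_insert, Finset.mem_singleton] at ha
    rw [Finset.mem_range]
    rcases ha with rfl | rfl
    · exact s.isLt
    · exact s'.isLt
  have h1 : 1 ≤ f (s : ℕ) := by
    apply one_le_crossCount_ascBlock p _ _ (pow_val_eq_zero p s)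
    exact fun hh => h ((c ^ (s : ℕ)).injective hh)
  have h2 : 1 ≤ f (s' : ℕ) := by
    show 1 ≤ crossCount p (ascBlock p) _ _
    rw [crossCount_comm]
    apply one_le_crossCount_ascBlock p _ _ (pow_val_eq_zero p s')
    exact fun hh => h ((c ^ ((s' : ℕ))).injective hh.symm)
  calc 2 ≤ f (s : ℕ) + f (s' : ℕ) := by omega
    _ = ∑ k ∈ ({(s : ℕ), (s' : ℕ)} : Finset ℕ), f k := (Finset.sum_pair hvne).symm
    _ ≤ ∑ k ∈ Finset.range p, f k := Finset.sum_le_sum_of_subset hsub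

lemma two_r_le (p r : ℕ) (hp : 2 ≤ p) (s s' : Fin p) (h : s ≠ s') :
    2 * r ≤ crossCount p (wordPow (fullTwistWord p) r) s s' := by
  induction r generalizing s s' with
  | zero => simp
  | succ r ih =>
    rw [wordPow_succ, crossCount_append]
    have h1 := two_le_crossCount_fullTwist p hp s s' h
    have h2 : permOf p (fullTwistWord p) s ≠ permOf p (fullTwistWord p) s' :=
      fun hh => h ((permOf p (fullTwistWord p)).injective hh)
    have h3 := ih _ _ h2
    omega

/-- If `w = α · ((σ_1⋯σ_{p-1})^p)^r` with `α` positive and `r ≥ 2`, then any two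
distinct strands cross at least `2r ≥ 4` times; consequently any two distinct
components of the closure have linking number (half the crossing count) at least
`r ≥ 2`. -/
theorem stmt6 (p r : ℕ) (α : List ℕ) (hp : 2 ≤ p) (hr : 2 ≤ r)
    (hα : ∀ i ∈ α, i + 1 < p) :
    (∀ s s' : Fin p, s ≠ s' →
        2 * r ≤ crossCount p (α ++ wordPow (fullTwistWord p) r) s s') ∧
    (∀ s s' : Fin p,
        ¬ (permOf p (α ++ wordPow (fullTwistWord p) r)).SameCycle s s' →
        r ≤ linking p (α ++ wordPow (fullTwistWord p) r)
              (permOf p (α ++ wordPow (fullTwistWord p) r)) s s') := by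
  have main : ∀ s s' : Fin p, s ≠ s' →
      2 * r ≤ crossCount p (α ++ wordPow (fullTwistWord p) r) s s' := by
    intro s s' h
    rw [crossCount_append]
    have h2 : permOf p α s ≠ permOf p α s' :=
      fun hh => h ((permOf p α).injective hh)
    have := two_r_le p r hp _ _ h2
    omega
  refine ⟨main, ?_⟩
  intro s s' hns
  set w := α ++ wordPow (fullTwistWord p) r with hw
  set π := permOf p w with hπ
  have hne : s ≠ s' := fun hh => hns (hh ▸ Equiv.Perm.SameCycle.refl π s)
  have hcb : 2 * r ≤ crossBetween p w π s s' := by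
    have hsmem : s ∈ orbitFinset p π s := by
      simp [orbitFinset, Equiv.Perm.SameCycle.refl]
    have hs'mem : s' ∈ orbitFinset p π s' := by
      simp [orbitFinset, Equiv.Perm.SameCycle.refl]
    calc 2 * r ≤ crossCount p w s s' := main s s' hne
      _ ≤ ∑ y ∈ orbitFinset p π s', crossCount p w s y :=
          Finset.single_le_sum (fun _ _ => Nat.zero_le _) hs'mem
      _ ≤ ∑ x ∈ orbitFinset p π s, ∑ y ∈ orbitFinset p π s', crossCount p w x y :=
          Finset.single_le_sum (f := fun x => ∑ y ∈ orbitFinset p π s', crossCount p w x y)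
            (fun _ _ => Nat.zero_le _) hsmem
      _ = crossBetween p w π s s' := rfl
  rw [linking, Nat.le_div_iff_mul_le (by norm_num)]
  omega
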